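/- arXiv:1006.3447 — 3 statements merged into one kernel-verified Lean document; each statement's English description precedes it below -/
import Mathlib

section
/- Circular moves are compatible with switching: if σ is a permutation of Z/nZ and μ(i) = s + σ(i + t) for fixed s, t ∈ Z/nZ (where the comparison order on Z/nZ is fixed by identifying with {0,…,n−1}), then the linking matrices x_{i,j} = sign((i−j)(σ(i)−σ(j))) and y_{i,j} = sign((i−j)(μ(i)−μ(j))) of σ and μ are switching-equivalent, i.e., Y = D Pᵀ X P D for some permutation matrix P and diagonal ±1 matrix D. -/
open Matrix

/-- Adding a constant `c` on `Fin n` changes the sign of differences (under the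
identification with `{0,…,n−1}`) by a product of `±1` factors recording wraparound. -/
lemma shift_sign {n : ℕ} [NeZero n] (a b c : Fin n) :
    ((((a + c : Fin n) : ℕ) : ℤ) - (((b + c : Fin n) : ℕ) : ℤ)).sign
      = (if (a : ℕ) + (c : ℕ) < n then (1:ℤ) else -1)
        * (if (b : ℕ) + (c : ℕ) < n then (1:ℤ) else -1)
        * (((a : ℕ) : ℤ) - ((b : ℕ) : ℤ)).sign := by
  have ha : ((a + c : Fin n) : ℕ) = ((a : ℕ) + (c : ℕ)) % n := Fin.val_add a c
  have hb : ((b + c : Fin n) : ℕ) = ((b : ℕ) + (c : ℕ)) % n := Fin.val_add b c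
  have ha2 : (a : ℕ) < n := a.2
  have hb2 : (b : ℕ) < n := b.2
  have hc2 : (c : ℕ) < n := c.2
  by_cases h1 : (a : ℕ) + (c : ℕ) < n <;> by_cases h2 : (b : ℕ) + (c : ℕ) < n
  · rw [if_pos h1, if_pos h2, one_mul, one_mul, ha, hb,
      Nat.mod_eq_of_lt h1, Nat.mod_eq_of_lt h2]
    congr 1
    push_cast
    ring
  · have hle : n ≤ (b : ℕ) + (c : ℕ) := le_of_not_gt h2
    have hbm : ((b : ℕ) + (c : ℕ)) % n = (b : ℕ) + (c : ℕ) - n := by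
      rw [Nat.mod_eq_sub_mod hle, Nat.mod_eq_of_lt (by omega)]
    rw [if_pos h1, if_neg h2, ha, hb, Nat.mod_eq_of_lt h1, hbm, Nat.cast_sub hle]
    have hx : (0:ℤ) < (((a:ℕ) + (c:ℕ) : ℕ) : ℤ) - ((((b:ℕ) + (c:ℕ) : ℕ) : ℤ) - (n:ℤ)) := by
      push_cast; omega
    have hy : (((a:ℕ):ℤ) - ((b:ℕ):ℤ)) < 0 := by omega
    rw [Int.sign_eq_one_of_pos hx, Int.sign_eq_neg_one_of_neg hy]
    ring
  · have hle : n ≤ (a : ℕ) + (c : ℕ) := le_of_not_gt h1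
    have ham : ((a : ℕ) + (c : ℕ)) % n = (a : ℕ) + (c : ℕ) - n := by
      rw [Nat.mod_eq_sub_mod hle, Nat.mod_eq_of_lt (by omega)]
    rw [if_neg h1, if_pos h2, ha, hb, Nat.mod_eq_of_lt h2, ham, Nat.cast_sub hle]
    have hx : ((((a:ℕ) + (c:ℕ) : ℕ) : ℤ) - (n:ℤ)) - (((b:ℕ) + (c:ℕ) : ℕ) : ℤ) < 0 := by
      push_cast; omega
    have hy : (0:ℤ) < (((a:ℕ):ℤ) - ((b:ℕ):ℤ)) := by omega
    rw [Int.sign_eq_neg_one_of_neg hx, Int.sign_eq_one_of_pos hy]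
    ring
  · have hlea : n ≤ (a : ℕ) + (c : ℕ) := le_of_not_gt h1
    have hleb : n ≤ (b : ℕ) + (c : ℕ) := le_of_not_gt h2
    have ham : ((a : ℕ) + (c : ℕ)) % n = (a : ℕ) + (c : ℕ) - n := by
      rw [Nat.mod_eq_sub_mod hlea, Nat.mod_eq_of_lt (by omega)]
    have hbm : ((b : ℕ) + (c : ℕ)) % n = (b : ℕ) + (c : ℕ) - n := by
      rw [Nat.mod_eq_sub_mod hleb, Nat.mod_eq_of_lt (by omega)]
    rw [if_neg h1, if_neg h2, ha, hb, ham, hbm, Nat.cast_sub hlea, Nat.cast_sub hleb,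
      neg_mul_neg, one_mul]
    congr 1
    push_cast
    ring

/-- `Y = D Pᵀ X P D` for some permutation matrix `P` and diagonal `±1` matrix `D`. -/
def SwitchingEquiv {n : ℕ} (X Y : Matrix (Fin n) (Fin n) ℤ) : Prop :=
  ∃ (π : Equiv.Perm (Fin n)) (d : Fin n → ℤ), (∀ i, d i = 1 ∨ d i = -1) ∧
    Y = Matrix.diagonal d * (π.permMatrix ℤ)ᵀ * X * π.permMatrix ℤ * Matrix.diagonal d

/-- Circular moves are compatible with switching: if `μ(i) = s + σ(i + t)` on `ℤ/nℤ`
(identified with `{0,…,n−1}` with its usual order), then the linking matrices of `σ`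
and `μ` are switching-equivalent. -/
theorem circular_move_switching {n : ℕ} [NeZero n] (σ : Equiv.Perm (Fin n))
    (s t : Fin n)
    (μ : Equiv.Perm (Fin n)) (hμ : ∀ i, μ i = s + σ (i + t))
    (X Y : Matrix (Fin n) (Fin n) ℤ)
    (hX : X = Matrix.of fun i j : Fin n =>
      Int.sign ((((i : ℕ) : ℤ) - ((j : ℕ) : ℤ)) *
        ((((σ i : Fin n) : ℕ) : ℤ) - (((σ j : Fin n) : ℕ) : ℤ))))
    (hY : Y = Matrix.of fun i j : Fin n =>
      Int.sign ((((i : ℕ) : ℤ) - ((j : ℕ) : ℤ)) *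
        ((((μ i : Fin n) : ℕ) : ℤ) - (((μ j : Fin n) : ℕ) : ℤ)))) :
    SwitchingEquiv X Y := by
  set π : Equiv.Perm (Fin n) := (Equiv.addRight t).symm with hπ
  set d : Fin n → ℤ := fun i =>
    (if (i : ℕ) + (t : ℕ) < n then (1:ℤ) else -1)
      * (if ((σ (i + t) : Fin n) : ℕ) + (s : ℕ) < n then (1:ℤ) else -1) with hd
  refine ⟨π, d, fun i => ?_, ?_⟩
  · simp only [hd]
    by_cases h1 : (i : ℕ) + (t : ℕ) < n <;>
      by_cases h2 : ((σ (i + t) : Fin n) : ℕ) + (s : ℕ) < n <;>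
      simp [h1, h2]
  · have hPt : (π.permMatrix ℤ)ᵀ = π.symm.toPEquiv.toMatrix := by
      rw [Equiv.toPEquiv_symm, PEquiv.toMatrix_symm]
    have e1 : Matrix.diagonal d * (π.permMatrix ℤ)ᵀ * X * π.permMatrix ℤ * Matrix.diagonal d
        = Matrix.diagonal d * (X.submatrix π.symm π.symm) * Matrix.diagonal d := by
      rw [hPt, Matrix.mul_assoc (Matrix.diagonal d), PEquiv.toMatrix_toPEquiv_mul,
        Matrix.mul_assoc (Matrix.diagonal d), PEquiv.mul_toMatrix_toPEquiv,
        Matrix.submatrix_submatrix]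
      rfl
    rw [e1]
    ext i j
    rw [Matrix.mul_diagonal, Matrix.diagonal_mul, Matrix.submatrix_apply]
    have hsi : π.symm i = i + t := rfl
    have hsj : π.symm j = j + t := rfl
    rw [hsi, hsj, hX, hY]
    simp only [Matrix.of_apply]
    rw [hμ i, hμ j, Int.sign_mul, Int.sign_mul,
      add_comm s (σ (i + t)), add_comm s (σ (j + t)),
      shift_sign (σ (i + t)) (σ (j + t)) s]
    have := shift_sign i j t
    rw [this, hd]
    simp only
    by_cases h1 : (i : ℕ) + (t : ℕ) < n <;>
      by_cases h2 : (j : ℕ) + (t : ℕ) < n <;>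
      by_cases h3 : ((σ (i + t) : Fin n) : ℕ) + (s : ℕ) < n <;>
      by_cases h4 : ((σ (j + t) : Fin n) : ℕ) + (s : ℕ) < n <;>
      simp only [h1, h2, h3, h4, if_true, if_false, if_pos, if_neg] <;> ring
end

section
/- A vertical reflection of a block preserves the switching class of the linking matrix: if σ is a permutation of {1,…,n} with σ([1,k]) = [1,k], and μ is defined by μ(i) = k+1−σ(k+1−i) for i ≤ k and μ(i) = σ(i) for i > k, then the linking matrices of σ and μ (given by x_{i,j} = sign((i−j)(σ(i)−σ(j)))) are switching-equivalent. -/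
open Matrix

/-- A vertical reflection of a block preserves the switching class of the linking
matrix: if `σ` maps the initial block (the first `k` indices) onto itself, and `μ`
reverses `σ` on the block (`μ(i) = k+1−σ(k+1−i)` in `1`-based indexing, i.e.
`μ(i) + σ(j) + 1 = k` whenever `i + j + 1 = k` in `0`-based indexing) and agrees
with `σ` outside the block, then the linking matrices of `σ` and `μ` are
switching-equivalent. -/
theorem vertical_reflection_switching {n k : ℕ} (hk : k ≤ n)
    (σ μ : Equiv.Perm (Fin n))
    (hσ : ∀ i : Fin n, (i : ℕ) < k → ((σ i : Fin n) : ℕ) < k)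
    (hμ₁ : ∀ i j : Fin n, (i : ℕ) + (j : ℕ) + 1 = k →
      ((μ i : Fin n) : ℕ) + ((σ j : Fin n) : ℕ) + 1 = k)
    (hμ₂ : ∀ i : Fin n, k ≤ (i : ℕ) → μ i = σ i)
    (X Y : Matrix (Fin n) (Fin n) ℤ)
    (hX : X = Matrix.of fun i j : Fin n =>
      Int.sign ((((i : ℕ) : ℤ) - ((j : ℕ) : ℤ)) *
        ((((σ i : Fin n) : ℕ) : ℤ) - (((σ j : Fin n) : ℕ) : ℤ))))
    (hY : Y = Matrix.of fun i j : Fin n =>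
      Int.sign ((((i : ℕ) : ℤ) - ((j : ℕ) : ℤ)) *
        ((((μ i : Fin n) : ℕ) : ℤ) - (((μ j : Fin n) : ℕ) : ℤ)))) :
    SwitchingEquiv X Y := by
  classical
  -- the reversal of the first k indices
  set f : Fin n → Fin n := fun i =>
    if h : (i : ℕ) < k then ⟨k - 1 - (i : ℕ), by omega⟩ else i with hf
  have hinv : Function.Involutive f := by
    intro i
    by_cases h : (i : ℕ) < k
    · simp only [hf, dif_pos h]
      have h2 : k - 1 - (i : ℕ) < k := by omega
      simp only [dif_pos h2]
      ext; simp; omega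
    · simp only [hf, dif_neg h, dif_neg h]
  set π : Equiv.Perm (Fin n) := hinv.toPerm with hπ
  have hπf : ∀ i, π i = f i := fun i => rfl
  have hπsymm : π.symm = π := hinv.toPerm_symm
  -- σ maps the complement of the block to itself
  have hσ' : ∀ i : Fin n, k ≤ (i : ℕ) → k ≤ ((σ i : Fin n) : ℕ) := by
    intro i hi
    by_contra hc
    push_neg at hc
    -- σ maps the block onto itself
    set S : Finset (Fin n) := Finset.univ.filter (fun x => (x : ℕ) < k) with hS
    have hmaps : ∀ x ∈ S, σ x ∈ S := by
      intro x hx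
      simp only [hS, Finset.mem_filter, Finset.mem_univ, true_and] at hx ⊢
      exact hσ x hx
    have himg : S.image σ = S := by
      apply Finset.eq_of_subset_of_card_le
      · intro y hy
        simp only [Finset.mem_image] at hy
        obtain ⟨x, hx, rfl⟩ := hy
        exact hmaps x hx
      · rw [Finset.card_image_of_injective _ σ.injective]
    have : σ i ∈ S := by
      simp only [hS, Finset.mem_filter, Finset.mem_univ, true_and]; exact hc
    rw [← himg] at this
    simp only [Finset.mem_image] at this
    obtain ⟨x, hx, hxe⟩ := this
    have := σ.injective hxe
    subst this
    simp only [hS, Finset.mem_filter, Finset.mem_univ, true_and] at hx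
    omega
  refine ⟨π, fun _ => 1, fun _ => Or.inl rfl, ?_⟩
  have hd : Matrix.diagonal (fun _ : Fin n => (1 : ℤ)) = 1 := by
    simp [Matrix.diagonal_one]
  rw [hd, Matrix.mul_one, Matrix.one_mul]
  have hperm : (π.permMatrix ℤ)ᵀ * X * π.permMatrix ℤ = X.submatrix π π := by
    have h1 : (π.permMatrix ℤ)ᵀ = π.symm.toPEquiv.toMatrix := by
      rw [Equiv.Perm.permMatrix, ← PEquiv.toMatrix_symm, Equiv.toPEquiv_symm]
    rw [h1, PEquiv.toMatrix_toPEquiv_mul, Equiv.Perm.permMatrix,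
      PEquiv.mul_toMatrix_toPEquiv, hπsymm]
    rfl
  rw [hperm]
  ext i j
  simp only [Matrix.submatrix_apply]
  rw [hX, hY]
  simp only [Matrix.of_apply]
  -- facts about f
  have hfval : ∀ x : Fin n, (x : ℕ) < k → ((f x : Fin n) : ℕ) = k - 1 - (x : ℕ) := by
    intro x hx; simp only [hf, dif_pos hx]
  have hfid : ∀ x : Fin n, k ≤ (x : ℕ) → f x = x := by
    intro x hx; simp only [hf, dif_neg (by omega : ¬ (x : ℕ) < k)]
  have hμval : ∀ x : Fin n, (x : ℕ) < k →
      ((μ x : Fin n) : ℕ) + ((σ (f x) : Fin n) : ℕ) + 1 = k := by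
    intro x hx
    apply hμ₁
    rw [hfval x hx]; omega
  rw [hπf, hπf]
  by_cases hi : (i : ℕ) < k <;> by_cases hj : (j : ℕ) < k
  · -- both in block
    have e1 := hμval i hi
    have e2 := hμval j hj
    have e3 := hfval i hi
    have e4 := hfval j hj
    congr 1
    have c1 : ((μ i : Fin n) : ℕ) + ((σ (f i) : Fin n) : ℕ) + 1 = (k : ℤ) := by
      exact_mod_cast congrArg (Nat.cast : ℕ → ℤ) e1
    have c2 : ((μ j : Fin n) : ℕ) + ((σ (f j) : Fin n) : ℕ) + 1 = (k : ℤ) := by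
      exact_mod_cast congrArg (Nat.cast : ℕ → ℤ) e2
    have c3 : ((f i : Fin n) : ℕ) + (i : ℕ) + 1 = (k : ℤ) := by
      have : ((f i : Fin n) : ℕ) + (i : ℕ) + 1 = k := by omega
      exact_mod_cast congrArg (Nat.cast : ℕ → ℤ) this
    have c4 : ((f j : Fin n) : ℕ) + (j : ℕ) + 1 = (k : ℤ) := by
      have : ((f j : Fin n) : ℕ) + (j : ℕ) + 1 = k := by omega
      exact_mod_cast congrArg (Nat.cast : ℕ → ℤ) this
    push_cast at c1 c2 c3 c4 ⊢
    linear_combination (((i : ℕ) : ℤ) - ((j : ℕ) : ℤ)) * c1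
      - (((i : ℕ) : ℤ) - ((j : ℕ) : ℤ)) * c2
      - ((((σ (f i) : Fin n) : ℕ) : ℤ) - (((σ (f j) : Fin n) : ℕ) : ℤ)) * c3
      + ((((σ (f i) : Fin n) : ℕ) : ℤ) - (((σ (f j) : Fin n) : ℕ) : ℤ)) * c4
  · -- i in block, j out
    push_neg at hj
    have e1 := hμval i hi
    have e3 := hfval i hi
    rw [hμ₂ j hj, hfid j hj]
    have hμi : ((μ i : Fin n) : ℕ) < k := by omega
    have hσj : k ≤ ((σ j : Fin n) : ℕ) := hσ' j hj
    have hfi : ((f i : Fin n) : ℕ) < k := by omega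
    have hσfi : ((σ (f i) : Fin n) : ℕ) < k := hσ (f i) hfi
    rw [Int.sign_eq_one_of_pos, Int.sign_eq_one_of_pos]
    · apply mul_pos_of_neg_of_neg <;> push_cast <;> omega
    · apply mul_pos_of_neg_of_neg <;> push_cast <;> omega
  · -- j in block, i out
    push_neg at hi
    have e2 := hμval j hj
    have e4 := hfval j hj
    rw [hμ₂ i hi, hfid i hi]
    have hμj : ((μ j : Fin n) : ℕ) < k := by omega
    have hσi : k ≤ ((σ i : Fin n) : ℕ) := hσ' i hi
    have hfj : ((f j : Fin n) : ℕ) < k := by omega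
    have hσfj : ((σ (f j) : Fin n) : ℕ) < k := hσ (f j) hfj
    rw [Int.sign_eq_one_of_pos, Int.sign_eq_one_of_pos]
    · apply mul_pos <;> push_cast <;> omega
    · apply mul_pos <;> push_cast <;> omega
  · -- both out
    push_neg at hi hj
    rw [hμ₂ i hi, hμ₂ j hj, hfid i hi, hfid j hj]
end

section
/- A horizontal reflection of a block preserves the switching class of the linking matrix: if σ is a permutation of {1,…,n} with σ([1,k]) = [1,k] for some 1 < k ≤ n, and μ(i) = σ⁻¹(i) for i ≤ k, μ(i) = σ(i) for i > k, then the linking matrices x_{i,j} = sign((i−j)(σ(i)−σ(j))) and y_{i,j} = sign((i−j)(μ(i)−μ(j))) are switching-equivalent. -/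
open Matrix

/-- A horizontal reflection of a block preserves the switching class of the linking
matrix: if `σ` maps the initial block (the first `k` indices, `1 < k ≤ n`) onto
itself, and `μ` equals `σ⁻¹` on the block and `σ` outside of it, then the linking
matrices of `σ` and `μ` are switching-equivalent. -/
theorem horizontal_reflection_switching {n k : ℕ} (hk₁ : 1 < k) (hk₂ : k ≤ n)
    (σ μ : Equiv.Perm (Fin n))
    (hσ : ∀ i : Fin n, (i : ℕ) < k → ((σ i : Fin n) : ℕ) < k)
    (hμ₁ : ∀ i : Fin n, (i : ℕ) < k → μ i = σ⁻¹ i)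
    (hμ₂ : ∀ i : Fin n, k ≤ (i : ℕ) → μ i = σ i)
    (X Y : Matrix (Fin n) (Fin n) ℤ)
    (hX : X = Matrix.of fun i j : Fin n =>
      Int.sign ((((i : ℕ) : ℤ) - ((j : ℕ) : ℤ)) *
        ((((σ i : Fin n) : ℕ) : ℤ) - (((σ j : Fin n) : ℕ) : ℤ))))
    (hY : Y = Matrix.of fun i j : Fin n =>
      Int.sign ((((i : ℕ) : ℤ) - ((j : ℕ) : ℤ)) *
        ((((μ i : Fin n) : ℕ) : ℤ) - (((μ j : Fin n) : ℕ) : ℤ)))) :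
    SwitchingEquiv X Y := by
  classical
  -- σ⁻¹ also maps the block into itself
  have hσ' : ∀ i : Fin n, (i : ℕ) < k → ((σ⁻¹ i : Fin n) : ℕ) < k := by
    intro i hi
    set s : Finset (Fin n) := Finset.univ.filter (fun j => (j : ℕ) < k) with hs
    have hmap : s.image σ ⊆ s := by
      intro x hx
      rw [Finset.mem_image] at hx
      obtain ⟨j, hj, rfl⟩ := hx
      simp only [hs, Finset.mem_filter, Finset.mem_univ, true_and] at hj ⊢
      exact hσ j hj
    have hcard : s.card ≤ (s.image σ).card :=
      le_of_eq (Finset.card_image_of_injective _ σ.injective).symm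
    have himg : s.image σ = s := Finset.eq_of_subset_of_card_le hmap hcard
    have hi' : i ∈ s := by simp [hs, hi]
    rw [← himg, Finset.mem_image] at hi'
    obtain ⟨j, hj, hji⟩ := hi'
    have : σ⁻¹ i = j := by rw [← hji]; simp
    rw [this]
    simpa [hs] using hj
  have hσ'' : ∀ i : Fin n, k ≤ (i : ℕ) → k ≤ ((σ i : Fin n) : ℕ) := by
    intro i hi
    by_contra h
    push_neg at h
    have := hσ' (σ i) h
    simp only [show σ⁻¹ (σ i) = i from σ.symm_apply_apply i] at this
    omega
  -- the switching permutation: σ on the block, identity outside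
  set π : Equiv.Perm (Fin n) :=
    { toFun := fun i => if (i : ℕ) < k then σ i else i
      invFun := fun i => if (i : ℕ) < k then σ⁻¹ i else i
      left_inv := by
        intro i
        by_cases h : (i : ℕ) < k
        · simp [h, hσ i h]
        · simp [h]
      right_inv := by
        intro i
        by_cases h : (i : ℕ) < k
        · simp [h, show ((σ.symm i : Fin n) : ℕ) < k from hσ' i h]
        · simp [h] } with hπ
  refine ⟨π, fun _ => 1, fun _ => Or.inl rfl, ?_⟩
  · have hd : Matrix.diagonal (fun _ : Fin n => (1 : ℤ)) = 1 := by
      simp [Matrix.diagonal_one]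
    have hT : (π.permMatrix ℤ)ᵀ = (π.symm.toPEquiv.toMatrix : Matrix (Fin n) (Fin n) ℤ) := by
      rw [Equiv.toPEquiv_symm, PEquiv.toMatrix_symm]
    rw [hd, Matrix.one_mul, Matrix.mul_one, hT]
    rw [show (π.permMatrix ℤ : Matrix (Fin n) (Fin n) ℤ) = π.toPEquiv.toMatrix from rfl]
    rw [PEquiv.toMatrix_toPEquiv_mul, PEquiv.mul_toMatrix_toPEquiv]
    subst hX hY
    ext i j
    simp only [Matrix.submatrix_apply, id_eq, Matrix.of_apply]
    have hent : ∀ i : Fin n, (π.symm i : Fin n) = if (i : ℕ) < k then σ⁻¹ i else i := fun _ => rfl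
    rw [hent i, hent j]
    by_cases hi : (i : ℕ) < k <;> by_cases hj : (j : ℕ) < k
    · -- both in the block
      rw [if_pos hi, if_pos hj, show σ (σ⁻¹ i) = i from σ.apply_symm_apply i, show σ (σ⁻¹ j) = j from σ.apply_symm_apply j]
      rw [hμ₁ i hi, hμ₁ j hj, mul_comm]
    · -- i in block, j outside
      rw [if_pos hi, if_neg hj]
      rw [hμ₁ i hi, hμ₂ j (le_of_not_gt hj)]
      have h1 : ((σ⁻¹ i : Fin n) : ℕ) < k := hσ' i hi
      have h2 : k ≤ ((σ j : Fin n) : ℕ) := hσ'' j (le_of_not_gt hj)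
      have e1 : ((((σ⁻¹ i : Fin n) : ℕ) : ℤ) - ((j : ℕ) : ℤ)) *
          ((((σ (σ⁻¹ i) : Fin n) : ℕ) : ℤ) - (((σ j : Fin n) : ℕ) : ℤ)) > 0 := by
        have : (σ (σ⁻¹ i) : Fin n) = i := σ.apply_symm_apply i
        rw [this]
        apply mul_pos_of_neg_of_neg <;> omega
      have e2 : ((((i : ℕ) : ℤ) - ((j : ℕ) : ℤ)) *
          ((((σ⁻¹ i : Fin n) : ℕ) : ℤ) - (((σ j : Fin n) : ℕ) : ℤ))) > 0 := by
        apply mul_pos_of_neg_of_neg <;> omega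
      rw [Int.sign_eq_one_of_pos e1, Int.sign_eq_one_of_pos e2]
    · -- i outside, j in block
      rw [if_neg hi, if_pos hj]
      rw [hμ₂ i (le_of_not_gt hi), hμ₁ j hj]
      have h1 : ((σ⁻¹ j : Fin n) : ℕ) < k := hσ' j hj
      have h2 : k ≤ ((σ i : Fin n) : ℕ) := hσ'' i (le_of_not_gt hi)
      have e1 : ((((i : ℕ) : ℤ) - (((σ⁻¹ j : Fin n) : ℕ) : ℤ)) *
          ((((σ i : Fin n) : ℕ) : ℤ) - (((σ (σ⁻¹ j) : Fin n) : ℕ) : ℤ))) > 0 := by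
        have : (σ (σ⁻¹ j) : Fin n) = j := σ.apply_symm_apply j
        rw [this]
        apply mul_pos <;> omega
      have e2 : ((((i : ℕ) : ℤ) - ((j : ℕ) : ℤ)) *
          ((((σ i : Fin n) : ℕ) : ℤ) - (((σ⁻¹ j : Fin n) : ℕ) : ℤ))) > 0 := by
        apply mul_pos <;> omega
      rw [Int.sign_eq_one_of_pos e1, Int.sign_eq_one_of_pos e2]
    · -- both outside
      rw [if_neg hi, if_neg hj]
      rw [hμ₂ i (le_of_not_gt hi), hμ₂ j (le_of_not_gt hj)]
end
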